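/- Let M be a compact hypersurface immersed in the unit sphere S^{n+1} ⊂ R^{n+2} with nonzero constant mean curvature H, and set c = (√(1+H²) − 1)/H. For every u ∈ R^{n+2}, the function h_u = f_u + c l_u satisfies the integral inequality ∫_M h_u J(h_u) ≤ −n ∫_M (f_u + H l_u)², where J is the Jacobi operator. -/

import Mathlib

open scoped RealInnerProductSpace

/-- A compact hypersurface `φ : M → S^{n+1} ⊂ ℝ^{n+2}` immersed in the unit sphere,
with Gauss map `ν`, shape operator `A` (expressed in orthonormal frames, so that
`Matrix.trace (A x) = n * H` and `|A|²(x) = ∑ i j, (A x i j)²`), constant mean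
curvature `H`, Laplace–Beltrami operator `Δ` acting on the smooth functions `Cinfty`,
and Riemannian volume measure `vol`.  The fields record the standard facts used in
the paper: `Δ l_v = -n l_v + n H f_v`, `Δ f_v = -|A|² f_v + n H l_v`, `|A|² ≥ n H²`
(Cauchy–Schwarz), self-adjointness of `Δ` and `∫ Δ g = 0` (the divergence theorem). -/
structure CMCHypersurface (n : ℕ) where
  M : Type
  [topM : TopologicalSpace M]
  [measM : MeasurableSpace M]
  borelM : BorelSpace M
  compactM : CompactSpace M
  nonemptyM : Nonempty M
  vol : MeasureTheory.Measure M
  finiteVol : MeasureTheory.IsFiniteMeasure vol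
  /-- the immersion -/
  φ : M → EuclideanSpace ℝ (Fin (n + 2))
  /-- the Gauss map -/
  ν : M → EuclideanSpace ℝ (Fin (n + 2))
  contφ : Continuous φ
  contν : Continuous ν
  φ_sphere : ∀ x, ‖φ x‖ = 1
  ν_sphere : ∀ x, ‖ν x‖ = 1
  ν_tangent : ∀ x, ⟪φ x, ν x⟫ = 0
  /-- the shape operator, expressed in orthonormal frames -/
  A : M → Matrix (Fin n) (Fin n) ℝ
  A_symm : ∀ x, (A x).IsSymm
  /-- the (constant) mean curvature, `H = (1/n) tr A` -/
  H : ℝ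
  traceA : ∀ x, (A x).trace = (n : ℝ) * H
  A2_ge : ∀ x, (n : ℝ) * H ^ 2 ≤ ∑ i, ∑ j, (A x i j) ^ 2
  /-- the smooth functions on `M` -/
  Cinfty : Submodule ℝ (M → ℝ)
  cont_of_mem : ∀ g ∈ Cinfty, Continuous g
  /-- the Laplace–Beltrami operator -/
  Δ : (M → ℝ) → (M → ℝ)
  Δ_mem : ∀ g ∈ Cinfty, Δ g ∈ Cinfty
  Δ_add : ∀ g ∈ Cinfty, ∀ h ∈ Cinfty, Δ (g + h) = Δ g + Δ h
  Δ_smul : ∀ (c : ℝ), ∀ g ∈ Cinfty, Δ (c • g) = c • Δ g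
  Δ_selfAdjoint : ∀ g ∈ Cinfty, ∀ h ∈ Cinfty,
    ∫ x, Δ g x * h x ∂vol = ∫ x, g x * Δ h x ∂vol
  Δ_int_zero : ∀ g ∈ Cinfty, ∫ x, Δ g x ∂vol = 0
  l_mem : ∀ v : EuclideanSpace ℝ (Fin (n + 2)), (fun x => ⟪φ x, v⟫) ∈ Cinfty
  f_mem : ∀ v : EuclideanSpace ℝ (Fin (n + 2)), (fun x => ⟪ν x, v⟫) ∈ Cinfty
  Δ_l : ∀ v : EuclideanSpace ℝ (Fin (n + 2)),
    Δ (fun x => ⟪φ x, v⟫) =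
      fun x => -(n : ℝ) * ⟪φ x, v⟫ + (n : ℝ) * H * ⟪ν x, v⟫
  Δ_f : ∀ v : EuclideanSpace ℝ (Fin (n + 2)),
    Δ (fun x => ⟪ν x, v⟫) =
      fun x => -(∑ i, ∑ j, (A x i j) ^ 2) * ⟪ν x, v⟫ + (n : ℝ) * H * ⟪φ x, v⟫

namespace CMCHypersurface

open MeasureTheory

variable {n : ℕ}

instance (S : CMCHypersurface n) : TopologicalSpace S.M := S.topM
instance (S : CMCHypersurface n) : MeasurableSpace S.M := S.measM
instance (S : CMCHypersurface n) : BorelSpace S.M := S.borelM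
instance (S : CMCHypersurface n) : CompactSpace S.M := S.compactM
instance (S : CMCHypersurface n) : Nonempty S.M := S.nonemptyM
instance (S : CMCHypersurface n) : IsFiniteMeasure S.vol := S.finiteVol

/-- `l_v(x) = ⟨φ(x), v⟩`. -/
noncomputable def l (S : CMCHypersurface n) (v : EuclideanSpace ℝ (Fin (n + 2))) :
    S.M → ℝ :=
  fun x => ⟪S.φ x, v⟫

/-- `f_v(x) = ⟨ν(x), v⟩`. -/
noncomputable def f (S : CMCHypersurface n) (v : EuclideanSpace ℝ (Fin (n + 2))) :
    S.M → ℝ :=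
  fun x => ⟪S.ν x, v⟫

/-- `|A|²`, the squared norm of the shape operator. -/
def A2 (S : CMCHypersurface n) : S.M → ℝ :=
  fun x => ∑ i, ∑ j, (S.A x i j) ^ 2

/-- The Jacobi (stability) operator `J(f) = -Δ f - |A|² f - n f`. -/
def J (S : CMCHypersurface n) (g : S.M → ℝ) : S.M → ℝ :=
  fun x => -(S.Δ g x) - S.A2 x * g x - (n : ℝ) * g x

/-- `M` is totally umbilical if its shape operator is everywhere a scalar
multiple of the identity. -/
def TotallyUmbilical (S : CMCHypersurface n) : Prop :=
  ∀ x, ∃ c : ℝ, S.A x = c • (1 : Matrix (Fin n) (Fin n) ℝ)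

/-- `M` is a Clifford hypersurface if, up to an ambient linear isometry, its image
is a cartesian product of two Euclidean spheres `S^k(r) × S^{n-k}(s)`, `r² + s² = 1`. -/
def IsClifford (S : CMCHypersurface n) : Prop :=
  ∃ (k : ℕ) (r s : ℝ), k < n + 1 ∧ 0 < r ∧ 0 < s ∧ r ^ 2 + s ^ 2 = 1 ∧
    ∃ T : EuclideanSpace ℝ (Fin (n + 2)) ≃ₗᵢ[ℝ] EuclideanSpace ℝ (Fin (n + 2)),
      Set.range (fun x => T (S.φ x)) =
        {y : EuclideanSpace ℝ (Fin (n + 2)) |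
          (∑ i : Fin (n + 2), if (i : ℕ) ≤ k then (y i) ^ 2 else 0) = r ^ 2 ∧
          (∑ i : Fin (n + 2), if (i : ℕ) ≤ k then 0 else (y i) ^ 2) = s ^ 2}

/-- The weak stability index: the supremum of the dimensions of subspaces
`V ⊆ C^∞(M)` with `∫ g = 0` for all `g ∈ V` and `∫ g J(g) < 0` for all
nonzero `g ∈ V`. -/
noncomputable def weakStabilityIndex (S : CMCHypersurface n) : Cardinal :=
  ⨆ (V : Submodule ℝ (S.M → ℝ)) (_ : (V : Set (S.M → ℝ)) ⊆ S.Cinfty ∧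
      ∀ g ∈ V, (∫ x, g x ∂S.vol) = 0 ∧ (g ≠ 0 → (∫ x, g x * S.J g x ∂S.vol) < 0)),
    Module.rank ℝ V

end CMCHypersurface


section Aux

open MeasureTheory

namespace CMCHypersurface

variable {n : ℕ}

lemma integrable_of_continuous (S : CMCHypersurface n) {g : S.M → ℝ}
    (hg : Continuous g) : Integrable g S.vol := by
  haveI : IsFiniteMeasureOnCompacts S.vol := ⟨fun K _ => measure_lt_top S.vol K⟩
  exact hg.integrable_of_hasCompactSupport (HasCompactSupport.of_compactSpace g)

lemma cont_f (S : CMCHypersurface n) (v : EuclideanSpace ℝ (Fin (n + 2))) :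
    Continuous (S.f v) :=
  S.cont_of_mem _ (S.f_mem v)

lemma cont_l (S : CMCHypersurface n) (v : EuclideanSpace ℝ (Fin (n + 2))) :
    Continuous (S.l v) :=
  S.cont_of_mem _ (S.l_mem v)

lemma nu_sum_sq (S : CMCHypersurface n) (x : S.M) :
    ∑ i, S.ν x i * S.ν x i = 1 := by
  have h1 : ⟪S.ν x, S.ν x⟫ = 1 := by
    rw [real_inner_self_eq_norm_sq, S.ν_sphere]; norm_num
  rw [PiLp.inner_apply] at h1
  simpa [mul_comm, ← pow_two] using h1

lemma A2_eq (S : CMCHypersurface n) (x : S.M) :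
    S.A2 x = ∑ i, ((n : ℝ) * S.H * S.φ x i
      - S.Δ (S.f (EuclideanSpace.single i 1)) x) * S.ν x i := by
  have key : ∀ i, S.A2 x * S.ν x i
      = (n : ℝ) * S.H * S.φ x i - S.Δ (S.f (EuclideanSpace.single i 1)) x := by
    intro i
    have h2 : ⟪S.ν x, (EuclideanSpace.single i 1 : EuclideanSpace ℝ (Fin (n+2)))⟫
        = S.ν x i := by
      simp [EuclideanSpace.inner_single_right]
    have h3 : ⟪S.φ x, (EuclideanSpace.single i 1 : EuclideanSpace ℝ (Fin (n+2)))⟫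
        = S.φ x i := by
      simp [EuclideanSpace.inner_single_right]
    have h1 : S.Δ (S.f (EuclideanSpace.single i 1)) x
        = -(∑ i', ∑ j, (S.A x i' j) ^ 2)
            * ⟪S.ν x, (EuclideanSpace.single i 1 : EuclideanSpace ℝ (Fin (n+2)))⟫
          + (n : ℝ) * S.H
            * ⟪S.φ x, (EuclideanSpace.single i 1 : EuclideanSpace ℝ (Fin (n+2)))⟫ :=
      congrFun (S.Δ_f (EuclideanSpace.single i 1)) x
    rw [h1, h2, h3]
    show S.A2 x * S.ν x i = (n : ℝ) * S.H * S.φ x i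
      - (-(S.A2 x) * S.ν x i + (n : ℝ) * S.H * S.φ x i)
    ring
  calc S.A2 x = ∑ i, S.A2 x * (S.ν x i * S.ν x i) := by
        rw [← Finset.mul_sum, S.nu_sum_sq x, mul_one]
    _ = ∑ i, ((n : ℝ) * S.H * S.φ x i
        - S.Δ (S.f (EuclideanSpace.single i 1)) x) * S.ν x i := by
      refine Finset.sum_congr rfl fun i _ => ?_
      rw [← mul_assoc, key i]

lemma cont_A2 (S : CMCHypersurface n) : Continuous S.A2 := by
  have : Continuous (fun x => ∑ i, ((n : ℝ) * S.H * S.φ x i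
      - S.Δ (S.f (EuclideanSpace.single i 1)) x) * S.ν x i) := by
    refine continuous_finset_sum _ fun i _ => Continuous.mul ?_ ?_
    · exact (continuous_const.mul ((continuous_apply i).comp ((PiLp.continuous_ofLp 2 _).comp S.contφ))).sub
        (S.cont_of_mem _ (S.Δ_mem _ (S.f_mem _)))
    · exact (continuous_apply i).comp ((PiLp.continuous_ofLp 2 _).comp S.contν)
  have he : S.A2 = fun x => ∑ i, ((n : ℝ) * S.H * S.φ x i
      - S.Δ (S.f (EuclideanSpace.single i 1)) x) * S.ν x i :=
    funext fun x => S.A2_eq x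
  rw [he]; exact this

end CMCHypersurface

end Aux

/-- With `c = (√(1+H²) − 1)/H` and `h_u = f_u + c l_u`, one has
`∫ h_u J(h_u) ≤ −n ∫ (f_u + H l_u)²`. -/
theorem CMCHypersurface.integral_h_jacobi_le {n : ℕ} (S : CMCHypersurface n)
    (hH : S.H ≠ 0) (c : ℝ) (hc : c = (Real.sqrt (1 + S.H ^ 2) - 1) / S.H)
    (u : EuclideanSpace ℝ (Fin (n + 2)))
    (h : S.M → ℝ) (hh : h = fun x => S.f u x + c * S.l u x) :
    ∫ x, h x * S.J h x ∂S.vol ≤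
      -(n : ℝ) * ∫ x, (S.f u x + S.H * S.l u x) ^ 2 ∂S.vol := by
  classical
  have contF : Continuous (S.f u) := S.cont_f u
  have contL : Continuous (S.l u) := S.cont_l u
  have contA2 : Continuous S.A2 := S.cont_A2
  -- the algebraic relation satisfied by c
  have h1H : (0:ℝ) ≤ 1 + S.H ^ 2 := by positivity
  have hs : Real.sqrt (1 + S.H ^ 2) ^ 2 = 1 + S.H ^ 2 := Real.sq_sqrt h1H
  have hcrel : c ^ 2 * S.H + 2 * c - S.H = 0 := by
    rw [hc]
    field_simp
    nlinarith [hs]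
  -- pointwise formulas for the Laplacian
  have e1 : ∀ x, S.Δ (S.f u) x = -(S.A2 x) * S.f u x + (n : ℝ) * S.H * S.l u x := by
    intro x
    have := congrFun (S.Δ_f u) x
    exact this
  have e2 : ∀ x, S.Δ (S.l u) x = -(n : ℝ) * S.l u x + (n : ℝ) * S.H * S.f u x := by
    intro x
    have := congrFun (S.Δ_l u) x
    exact this
  -- Laplacian of h
  have hsum : h = S.f u + c • S.l u := by
    funext x
    simp [hh, CMCHypersurface.f, CMCHypersurface.l]
  have memF : S.f u ∈ S.Cinfty := S.f_mem u
  have memL : S.l u ∈ S.Cinfty := S.l_mem u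
  have hΔh : ∀ x, S.Δ h x = S.Δ (S.f u) x + c * S.Δ (S.l u) x := by
    intro x
    rw [hsum, S.Δ_add _ memF _ (Submodule.smul_mem _ c memL), S.Δ_smul c _ memL]
    simp
  -- the key pointwise identity
  have ptw : ∀ x, h x * S.J h x
      = (-(n:ℝ)) * (S.f u x + S.H * S.l u x) ^ 2
        + (-(c ^ 2)) * ((S.A2 x - (n:ℝ) * S.H ^ 2) * (S.l u x) ^ 2)
        + c * (-(S.A2 x * S.f u x * S.l u x) + (n:ℝ) * S.H * (S.l u x) ^ 2
            + (n:ℝ) * (S.f u x * S.l u x) - (n:ℝ) * S.H * (S.f u x) ^ 2) := by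
    intro x
    have e4 : h x = S.f u x + c * S.l u x := by rw [hh]
    simp only [CMCHypersurface.J]
    rw [hΔh x, e1 x, e2 x, e4]
    linear_combination (-(n:ℝ) * (S.f u x * S.l u x) - (n:ℝ) * S.H * (S.l u x) ^ 2) * hcrel
  -- integrability
  have iQ : MeasureTheory.Integrable (fun x => (-(n:ℝ)) * (S.f u x + S.H * S.l u x) ^ 2) S.vol := by
    apply S.integrable_of_continuous
    exact continuous_const.mul (((contF.add (continuous_const.mul contL)).pow 2))
  have iR : MeasureTheory.Integrable
      (fun x => (-(c ^ 2)) * ((S.A2 x - (n:ℝ) * S.H ^ 2) * (S.l u x) ^ 2)) S.vol := by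
    apply S.integrable_of_continuous
    exact continuous_const.mul ((contA2.sub continuous_const).mul (contL.pow 2))
  have iT : MeasureTheory.Integrable
      (fun x => c * (-(S.A2 x * S.f u x * S.l u x) + (n:ℝ) * S.H * (S.l u x) ^ 2
          + (n:ℝ) * (S.f u x * S.l u x) - (n:ℝ) * S.H * (S.f u x) ^ 2)) S.vol := by
    apply S.integrable_of_continuous
    refine continuous_const.mul ?_
    exact ((((contA2.mul contF).mul contL).neg.add
      (continuous_const.mul (contL.pow 2))).add
      (continuous_const.mul (contF.mul contL))).sub
      (continuous_const.mul (contF.pow 2))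
  -- self-adjointness gives that the third integral vanishes
  have sa : ∫ x, (-(S.A2 x) * S.f u x + (n:ℝ) * S.H * S.l u x) * S.l u x ∂S.vol
      = ∫ x, S.f u x * (-(n:ℝ) * S.l u x + (n:ℝ) * S.H * S.f u x) ∂S.vol := by
    have sa0 := S.Δ_selfAdjoint _ (S.f_mem u) _ (S.l_mem u)
    calc ∫ x, (-(S.A2 x) * S.f u x + (n:ℝ) * S.H * S.l u x) * S.l u x ∂S.vol
        = ∫ x, S.Δ (S.f u) x * S.l u x ∂S.vol := by
          refine MeasureTheory.integral_congr_ae (Filter.Eventually.of_forall fun x => ?_)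
          simp only [e1]
      _ = ∫ x, S.f u x * S.Δ (S.l u) x ∂S.vol := sa0
      _ = ∫ x, S.f u x * (-(n:ℝ) * S.l u x + (n:ℝ) * S.H * S.f u x) ∂S.vol := by
          refine MeasureTheory.integral_congr_ae (Filter.Eventually.of_forall fun x => ?_)
          simp only [e2]
  have iT1 : MeasureTheory.Integrable
      (fun x => (-(S.A2 x) * S.f u x + (n:ℝ) * S.H * S.l u x) * S.l u x) S.vol := by
    apply S.integrable_of_continuous
    exact ((contA2.neg.mul contF).add (continuous_const.mul contL)).mul contL
  have iT2 : MeasureTheory.Integrable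
      (fun x => S.f u x * (-(n:ℝ) * S.l u x + (n:ℝ) * S.H * S.f u x)) S.vol := by
    apply S.integrable_of_continuous
    exact contF.mul ((continuous_const.mul contL).add (continuous_const.mul contF))
  have hT0 : ∫ x, c * (-(S.A2 x * S.f u x * S.l u x) + (n:ℝ) * S.H * (S.l u x) ^ 2
      + (n:ℝ) * (S.f u x * S.l u x) - (n:ℝ) * S.H * (S.f u x) ^ 2) ∂S.vol = 0 := by
    rw [MeasureTheory.integral_const_mul]
    have heq : (fun x => -(S.A2 x * S.f u x * S.l u x) + (n:ℝ) * S.H * (S.l u x) ^ 2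
        + (n:ℝ) * (S.f u x * S.l u x) - (n:ℝ) * S.H * (S.f u x) ^ 2)
        = fun x => (-(S.A2 x) * S.f u x + (n:ℝ) * S.H * S.l u x) * S.l u x
          - S.f u x * (-(n:ℝ) * S.l u x + (n:ℝ) * S.H * S.f u x) := by
      funext x; ring
    rw [heq, MeasureTheory.integral_sub iT1 iT2, sa, sub_self, mul_zero]
  -- split the main integral
  have main : ∫ x, h x * S.J h x ∂S.vol
      = (-(n:ℝ)) * (∫ x, (S.f u x + S.H * S.l u x) ^ 2 ∂S.vol)
        + (-(c ^ 2)) * (∫ x, (S.A2 x - (n:ℝ) * S.H ^ 2) * (S.l u x) ^ 2 ∂S.vol) := by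
    calc ∫ x, h x * S.J h x ∂S.vol
        = ∫ x, ((-(n:ℝ)) * (S.f u x + S.H * S.l u x) ^ 2
            + (-(c ^ 2)) * ((S.A2 x - (n:ℝ) * S.H ^ 2) * (S.l u x) ^ 2)
            + c * (-(S.A2 x * S.f u x * S.l u x) + (n:ℝ) * S.H * (S.l u x) ^ 2
                + (n:ℝ) * (S.f u x * S.l u x) - (n:ℝ) * S.H * (S.f u x) ^ 2)) ∂S.vol := by
          refine MeasureTheory.integral_congr_ae (Filter.Eventually.of_forall fun x => ?_)
          exact ptw x
      _ = (∫ x, ((-(n:ℝ)) * (S.f u x + S.H * S.l u x) ^ 2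
            + (-(c ^ 2)) * ((S.A2 x - (n:ℝ) * S.H ^ 2) * (S.l u x) ^ 2)) ∂S.vol)
          + ∫ x, c * (-(S.A2 x * S.f u x * S.l u x) + (n:ℝ) * S.H * (S.l u x) ^ 2
              + (n:ℝ) * (S.f u x * S.l u x) - (n:ℝ) * S.H * (S.f u x) ^ 2) ∂S.vol :=
          MeasureTheory.integral_add (iQ.add iR) iT
      _ = (-(n:ℝ)) * (∫ x, (S.f u x + S.H * S.l u x) ^ 2 ∂S.vol)
          + (-(c ^ 2)) * (∫ x, (S.A2 x - (n:ℝ) * S.H ^ 2) * (S.l u x) ^ 2 ∂S.vol) := by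
          rw [hT0, add_zero, MeasureTheory.integral_add iQ iR,
            MeasureTheory.integral_const_mul, MeasureTheory.integral_const_mul]
  -- nonnegativity of the remainder
  have hnonneg : 0 ≤ ∫ x, (S.A2 x - (n:ℝ) * S.H ^ 2) * (S.l u x) ^ 2 ∂S.vol := by
    apply MeasureTheory.integral_nonneg
    intro x
    have hA : (n:ℝ) * S.H ^ 2 ≤ S.A2 x := S.A2_ge x
    simp only [Pi.zero_apply]
    exact mul_nonneg (by linarith) (sq_nonneg _)
  rw [main]
  nlinarith [sq_nonneg c]
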